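/- Let k ≥ 2 be an integer and G a simple non-complete graph on n vertices with β^k(G) ≥ 1. Then the vertex connectivity satisfies κ(G) ≥ ((β^k(G) − 1)/(β^k(G) + 1)) · n. -/

import Mathlib

open Finset
open scoped Classical

variable {V : Type*}

/-- The k-th neighborhood: vertices adjacent to at least `k` vertices of `S`. -/
noncomputable def kNbhd [Fintype V] (G : SimpleGraph V) (k : ℕ) (S : Finset V) : Finset V :=
  Finset.univ.filter fun v => k ≤ (S.filter fun u => G.Adj v u).card

/-- The k-th binding number. -/
noncomputable def bindingNum [Fintype V] (G : SimpleGraph V) (k : ℕ) : ℝ :=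
  if h : (Finset.univ.filter fun S : Finset V =>
      k ≤ S.card ∧ kNbhd G k S ≠ Finset.univ).Nonempty then
    (Finset.univ.filter fun S : Finset V =>
      k ≤ S.card ∧ kNbhd G k S ≠ Finset.univ).inf' h
      fun S => ((kNbhd G k S).card : ℝ) / (S.card : ℝ)
  else 0

lemma binding_le [Fintype V] {G : SimpleGraph V} {k : ℕ} {S : Finset V}
    (h1 : k ≤ S.card) (h2 : kNbhd G k S ≠ Finset.univ) :
    bindingNum G k ≤ ((kNbhd G k S).card : ℝ) / (S.card : ℝ) := by
  have hmem : S ∈ Finset.univ.filter fun T : Finset V =>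
      k ≤ T.card ∧ kNbhd G k T ≠ Finset.univ := by simp [h1, h2]
  rw [bindingNum, dif_pos ⟨S, hmem⟩]
  exact Finset.inf'_le _ hmem
lemma mem_kNbhd [Fintype V] {G : SimpleGraph V} {k : ℕ} {S : Finset V} {v : V} :
    v ∈ kNbhd G k S ↔ k ≤ (S.filter fun u => G.Adj v u).card := by
  simp [kNbhd]
lemma kNbhd_exists_adj [Fintype V] {G : SimpleGraph V} {k : ℕ} (hk : 1 ≤ k)
    {S : Finset V} {v : V} (hv : v ∈ kNbhd G k S) : ∃ u ∈ S, G.Adj v u := by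
  rw [mem_kNbhd] at hv
  have : (S.filter fun u => G.Adj v u).Nonempty := Finset.card_pos.mp (lt_of_lt_of_le hk hv)
  obtain ⟨u, hu⟩ := this
  simp only [Finset.mem_filter] at hu
  exact ⟨u, hu.1, hu.2⟩
lemma kNbhd_all [Fintype V] {G : SimpleGraph V} {k : ℕ} {S : Finset V}
    (hS : S.card = k) {v : V} (hv : v ∈ kNbhd G k S) :
    v ∉ S ∧ ∀ u ∈ S, G.Adj v u := by
  rw [mem_kNbhd] at hv
  have heq : S.filter (fun u => G.Adj v u) = S :=
    Finset.eq_of_subset_of_card_le (Finset.filter_subset _ _) (le_trans (hS ▸ hv) le_rfl)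
  constructor
  · intro hvS
    exact G.irrefl (Finset.mem_filter.mp (heq ▸ hvS)).2
  · intro u hu
    exact (Finset.mem_filter.mp (heq ▸ hu)).2

lemma cut_bound [Fintype V] {G : SimpleGraph V} {k : ℕ} (hk : 2 ≤ k)
    (hkn : k ≤ Fintype.card V)
    (hβ : 1 ≤ bindingNum G k)
    (A B U : Finset V)
    (hUniv : A ∪ B ∪ U = Finset.univ)
    (hAB : Disjoint A B) (hAU : Disjoint A U) (hBU : Disjoint B U)
    (hA : A.Nonempty) (hB : B.Nonempty) (hcard : B.card ≤ A.card)
    (hadj : ∀ a ∈ A, ∀ b ∈ B, ¬ G.Adj a b) :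
    (bindingNum G k - 1) * (Fintype.card V : ℝ) ≤ (bindingNum G k + 1) * U.card := by
  set b := bindingNum G k with hb
  have hABU : Disjoint (A ∪ B) U := Finset.disjoint_union_left.mpr ⟨hAU, hBU⟩
  have hn : Fintype.card V = A.card + B.card + U.card := by
    rw [← Finset.card_univ, ← hUniv, Finset.card_union_of_disjoint hABU,
      Finset.card_union_of_disjoint hAB]
  -- real versions
  have hnR : (Fintype.card V : ℝ) = (A.card : ℝ) + B.card + U.card := by
    rw [hn]; push_cast; ring
  have hcardR : (B.card : ℝ) ≤ (A.card : ℝ) := by exact_mod_cast hcard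
  obtain ⟨y, hy⟩ := hB
  obtain ⟨x, hx⟩ := hA
  have hmemAU : ∀ v : V, v ∉ B → v ∈ A ∪ U := by
    intro v hvB
    have : v ∈ A ∪ B ∪ U := hUniv ▸ Finset.mem_univ v
    simp only [Finset.mem_union] at this ⊢
    tauto
  have hyAU : y ∉ A ∪ U := by
    simp only [Finset.mem_union]
    push_neg
    exact ⟨fun h => (Finset.disjoint_left.mp hAB h) hy,
           fun h => (Finset.disjoint_left.mp hBU hy) h⟩
  by_cases h1 : k ≤ A.card
  · -- S = A
    have hsub : kNbhd G k A ⊆ A ∪ U := by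
      intro v hv
      obtain ⟨u, hu, hadj'⟩ := kNbhd_exists_adj (by omega) hv
      refine hmemAU v fun hvB => ?_
      exact hadj u hu v hvB hadj'.symm
    have hne : kNbhd G k A ≠ Finset.univ := fun h => hyAU (hsub (h ▸ Finset.mem_univ y))
    have hble := binding_le h1 hne
    have hApos : (0:ℝ) < A.card := by
      have : 0 < A.card := by omega
      exact_mod_cast this
    have hc1 : b * A.card ≤ ((kNbhd G k A).card : ℝ) := by
      rw [div_eq_mul_inv] at hble
      calc b * A.card ≤ ((kNbhd G k A).card : ℝ) / A.card * A.card := by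
            apply mul_le_mul_of_nonneg_right _ (le_of_lt hApos)
            rw [div_eq_mul_inv]; exact hble
        _ = _ := by field_simp
    have hc2 : ((kNbhd G k A).card : ℝ) ≤ (A.card : ℝ) + U.card := by
      have := Finset.card_le_card hsub
      have h2 := Finset.card_union_le A U
      have : (kNbhd G k A).card ≤ A.card + U.card := le_trans this h2
      exact_mod_cast this
    have hba : b * A.card ≤ (A.card : ℝ) + U.card := le_trans hc1 hc2
    have hmul : (b - 1) * B.card ≤ (b - 1) * A.card :=
      mul_le_mul_of_nonneg_left hcardR (by linarith)
    nlinarith [hba, hmul]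
  · push_neg at h1
    by_cases h2 : k ≤ A.card + U.card
    · -- S = A ∪ T, T ⊆ U
      obtain ⟨T, hTU, hTcard⟩ := Finset.exists_subset_card_eq (by omega : k - A.card ≤ U.card)
      have hAT : Disjoint A T := hAU.mono_right hTU
      set S := A ∪ T with hS
      have hScard : S.card = k := by
        rw [hS, Finset.card_union_of_disjoint hAT, hTcard]; omega
      have hsub : kNbhd G k S ⊆ A ∪ U := by
        intro v hv
        obtain ⟨hvS, hall⟩ := kNbhd_all hScard hv
        have hadjx : G.Adj v x := hall x (Finset.mem_union_left _ hx)
        refine hmemAU v fun hvB => ?_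
        exact hadj x hx v hvB hadjx.symm
      have hne : kNbhd G k S ≠ Finset.univ := fun h => hyAU (hsub (h ▸ Finset.mem_univ y))
      have hble := binding_le hScard.ge hne
      rw [hScard] at hble
      have hkpos : (0:ℝ) < k := by positivity
      have hc1 : b * k ≤ ((kNbhd G k S).card : ℝ) := by
        calc b * k ≤ ((kNbhd G k S).card : ℝ) / k * k :=
              mul_le_mul_of_nonneg_right hble (le_of_lt hkpos)
          _ = _ := by field_simp
      have hc2 : ((kNbhd G k S).card : ℝ) ≤ (A.card : ℝ) + U.card := by
        have := le_trans (Finset.card_le_card hsub) (Finset.card_union_le A U)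
        exact_mod_cast this
      have hbk : b * k ≤ (A.card : ℝ) + U.card := le_trans hc1 hc2
      have hak : (A.card : ℝ) + 1 ≤ (k : ℝ) := by exact_mod_cast h1
      have hm1 : (b - 1) * A.card ≤ (b - 1) * k :=
        mul_le_mul_of_nonneg_left (by linarith) (by linarith)
      have hm2 : (b - 1) * B.card ≤ (b - 1) * k :=
        mul_le_mul_of_nonneg_left (by linarith) (by linarith)
      nlinarith [hbk, hm1, hm2]
    · -- S = A ∪ U ∪ T, T ⊆ B : contradiction
      push_neg at h2
      obtain ⟨T, hTB, hTcard⟩ := Finset.exists_subset_card_eq (by omega : k - (A.card + U.card) ≤ B.card)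
      have hAUT : Disjoint (A ∪ U) T :=
        (Finset.disjoint_union_left.mpr ⟨hAB, hBU.symm⟩).mono_right hTB
      set S := A ∪ U ∪ T with hS
      have hScard : S.card = k := by
        rw [hS, Finset.card_union_of_disjoint hAUT,
          Finset.card_union_of_disjoint hAU, hTcard]; omega
      have hempty : kNbhd G k S = ∅ := by
        rw [Finset.eq_empty_iff_forall_notMem]
        intro v hv
        obtain ⟨hvS, hall⟩ := kNbhd_all hScard hv
        have hadjx : G.Adj v x := hall x (by simp [hS, hx])
        by_cases hvB : v ∈ B
        · exact hadj x hx v hvB hadjx.symm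
        · exact hvS (Finset.mem_union_left _ (hmemAU v hvB))
      have hne : kNbhd G k S ≠ Finset.univ := by
        rw [hempty]
        intro h
        exact Finset.notMem_empty x (h ▸ Finset.mem_univ x)
      have hble := binding_le hScard.ge hne
      rw [hempty] at hble
      simp at hble
      linarith

theorem stmt_10 [Fintype V] (k : ℕ) (hk : 2 ≤ k) (G : SimpleGraph V)
    (hG : G ≠ ⊤) (hβ : 1 ≤ bindingNum G k) :
    ∀ U : Finset V,
      (¬ (G.induce ((↑U : Set V)ᶜ)).Connected ∨ ((↑U : Set V)ᶜ).ncard ≤ 1) →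
      (bindingNum G k - 1) / (bindingNum G k + 1) * (Fintype.card V : ℝ) ≤
        (U.card : ℝ) := by
  intro U hU
  have hne : (Finset.univ.filter fun S : Finset V =>
      k ≤ S.card ∧ kNbhd G k S ≠ Finset.univ).Nonempty := by
    by_contra h
    rw [bindingNum, dif_neg h] at hβ
    linarith
  obtain ⟨S0, hS0mem⟩ := hne
  simp only [Finset.mem_filter, Finset.mem_univ, true_and] at hS0mem
  obtain ⟨hS0k, hS0ne⟩ := hS0mem
  have hkn : k ≤ Fintype.card V := le_trans hS0k (Finset.card_le_univ S0)
  have hb1 : (1:ℝ) ≤ bindingNum G k := hβ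
  have hbpos : (0:ℝ) < bindingNum G k + 1 := by linarith
  -- b * k ≤ n
  have hbk : bindingNum G k * k ≤ (Fintype.card V : ℝ) := by
    have hble := binding_le hS0k hS0ne
    have hS0pos : (0:ℝ) < S0.card := by
      have : 0 < S0.card := by omega
      exact_mod_cast this
    have h1 : bindingNum G k * S0.card ≤ ((kNbhd G k S0).card : ℝ) := by
      calc bindingNum G k * S0.card ≤ ((kNbhd G k S0).card : ℝ) / S0.card * S0.card :=
            mul_le_mul_of_nonneg_right hble (le_of_lt hS0pos)
        _ = _ := by field_simp
    have h2 : ((kNbhd G k S0).card : ℝ) ≤ (Fintype.card V : ℝ) := by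
      exact_mod_cast Finset.card_le_univ _
    have h3 : bindingNum G k * k ≤ bindingNum G k * S0.card := by
      apply mul_le_mul_of_nonneg_left _ (by linarith)
      exact_mod_cast hS0k
    linarith
  rw [div_mul_eq_mul_div, div_le_iff₀ hbpos]
  by_cases hsmall : ((↑U : Set V)ᶜ).ncard ≤ 1
  · -- almost all vertices removed
    have hcompl : ((↑U : Set V)ᶜ) = (↑(Uᶜ) : Set V) := by simp
    rw [hcompl, Set.ncard_coe_finset] at hsmall
    have hcc : U.card + Uᶜ.card = Fintype.card V := Finset.card_add_card_compl U
    have hUn : (Fintype.card V : ℝ) ≤ (U.card : ℝ) + 1 := by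
      have : Fintype.card V ≤ U.card + 1 := by omega
      exact_mod_cast this
    have hkR : (2:ℝ) ≤ (k:ℝ) := by exact_mod_cast hk
    have hknR : (k:ℝ) ≤ (Fintype.card V : ℝ) := by exact_mod_cast hkn
    nlinarith [mul_nonneg (by linarith : (0:ℝ) ≤ bindingNum G k)
        (by linarith : (0:ℝ) ≤ (k:ℝ) - 2),
      mul_nonneg (le_of_lt hbpos) (by linarith : (0:ℝ) ≤ (U.card : ℝ) + 1 - Fintype.card V)]
  · have hdis : ¬ (G.induce ((↑U : Set V)ᶜ)).Connected := hU.resolve_right hsmall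
    push_neg at hsmall
    have hW2 : 2 ≤ (Uᶜ : Finset V).card := by
      have hcompl : ((↑U : Set V)ᶜ) = (↑(Uᶜ) : Set V) := by simp
      rw [hcompl, Set.ncard_coe_finset] at hsmall
      omega
    have hnonempty : Nonempty ((↑U : Set V)ᶜ : Set V) := by
      obtain ⟨w, hw⟩ := Finset.card_pos.mp (by omega : 0 < (Uᶜ : Finset V).card)
      exact ⟨w, by simpa using Finset.mem_compl.mp hw⟩
    rw [SimpleGraph.connected_iff] at hdis
    have hpre : ¬ (G.induce ((↑U : Set V)ᶜ)).Preconnected := fun hp => hdis ⟨hp, hnonempty⟩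
    rw [SimpleGraph.Preconnected] at hpre
    push_neg at hpre
    obtain ⟨xh, yh, hxy⟩ := hpre
    set A0 : Finset V := Finset.univ.filter fun v =>
      ∃ hv : v ∈ ((↑U : Set V)ᶜ), (G.induce ((↑U : Set V)ᶜ)).Reachable xh ⟨v, hv⟩ with hA0def
    set B0 : Finset V := Finset.univ.filter fun v => v ∉ U ∧ v ∉ A0 with hB0def
    have hA0notU : ∀ v ∈ A0, v ∉ U := by
      intro v hv
      rw [hA0def, Finset.mem_filter] at hv
      obtain ⟨-, hv', -⟩ := hv
      simpa using hv'
    have hxA0 : ↑xh ∈ A0 := by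
      rw [hA0def, Finset.mem_filter]
      exact ⟨Finset.mem_univ _, xh.2, by rw [Subtype.coe_eta]⟩
    have hyB0 : ↑yh ∈ B0 := by
      rw [hB0def, Finset.mem_filter]
      refine ⟨Finset.mem_univ _, yh.2, ?_⟩
      intro hyA
      rw [hA0def, Finset.mem_filter] at hyA
      obtain ⟨-, hv, hr⟩ := hyA
      rw [Subtype.coe_eta] at hr
      exact hxy hr
    have hA0B0 : Disjoint A0 B0 := by
      rw [Finset.disjoint_left]
      intro v hvA hvB
      rw [hB0def, Finset.mem_filter] at hvB
      exact hvB.2.2 hvA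
    have hA0U : Disjoint A0 U := by
      rw [Finset.disjoint_left]
      exact fun v hvA hvU => hA0notU v hvA hvU
    have hB0U : Disjoint B0 U := by
      rw [Finset.disjoint_left]
      intro v hvB hvU
      rw [hB0def, Finset.mem_filter] at hvB
      exact hvB.2.1 hvU
    have hUniv : A0 ∪ B0 ∪ U = Finset.univ := by
      ext v
      simp only [Finset.mem_union, Finset.mem_univ, iff_true]
      by_cases hvU : v ∈ U
      · tauto
      · by_cases hvA : v ∈ A0
        · tauto
        · left; right
          rw [hB0def, Finset.mem_filter]
          exact ⟨Finset.mem_univ _, hvU, hvA⟩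
    have hnoedge : ∀ a ∈ A0, ∀ c ∈ B0, ¬ G.Adj a c := by
      intro a ha c hc hadj
      rw [hA0def, Finset.mem_filter] at ha
      obtain ⟨-, hva, hra⟩ := ha
      rw [hB0def, Finset.mem_filter] at hc
      have hcs : c ∈ ((↑U : Set V)ᶜ) := by simpa using hc.2.1
      have hadj' : (G.induce ((↑U : Set V)ᶜ)).Adj ⟨a, hva⟩ ⟨c, hcs⟩ := by
        exact hadj
      have hrc : (G.induce ((↑U : Set V)ᶜ)).Reachable xh ⟨c, hcs⟩ :=
        hra.trans hadj'.reachable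
      apply hc.2.2
      rw [hA0def, Finset.mem_filter]
      exact ⟨Finset.mem_univ _, hcs, hrc⟩
    have hA0ne : A0.Nonempty := ⟨_, hxA0⟩
    have hB0ne : B0.Nonempty := ⟨_, hyB0⟩
    by_cases hcard : B0.card ≤ A0.card
    · have := cut_bound hk hkn hβ A0 B0 U hUniv hA0B0 hA0U hB0U hA0ne hB0ne hcard hnoedge
      linarith
    · have hnoedge' : ∀ a ∈ B0, ∀ b ∈ A0, ¬ G.Adj a b :=
        fun a ha c hc h => hnoedge c hc a ha h.symm
      have hUniv' : B0 ∪ A0 ∪ U = Finset.univ := by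
        rw [Finset.union_comm B0 A0]; exact hUniv
      have := cut_bound hk hkn hβ B0 A0 U hUniv' hA0B0.symm hB0U hA0U hB0ne hA0ne
        (le_of_not_ge hcard) hnoedge'
      linarith
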